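/- Let $\Sigma\in\mathsf{c}\text{-}\mathsf{Fan}_{sc}(2)$ be a complete sign-coherent fan of rank 2. Then $\Sigma$ contains $\mathrm{cone}\{(-1,0),(0,1)\}$ if and only if its quiddity sequence (with the convention that it is written $(a_1,\dots,a_i; a_n,\dots,a_{i+1})$ splitting at the rays $(0,-1)$ and $(-1,0)$) has the form $(b_1,\dots,b_m;0,0)$. In that case $b_j\ge 0$ for all $1\le j\le m$. -/

import Mathlib

/-- Let `Σ` be a complete sign-coherent fan of rank 2, with rays
`v 1 = (1,0), …, v i₀ = (0,-1), v (i₀+1) = (-1,0), …, v n = v 0 = (0,1)` in clockwise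
order (pairwise distinct, consecutive pairs `ℤ`-bases, each consecutive pair lying in a
common closed quadrant) and quiddity sequence `a`.  Then `Σ` contains
`cone{(-1,0),(0,1)}` (i.e. `v (n-1) = (-1,0)`) if and only if its split quiddity
sequence has the form `(b 1, …, b m; 0, 0)` (i.e. `i₀ = n-2` and
`a (n-1) = a n = 0`), and in that case all `b j = a j ≥ 0` for `1 ≤ j ≤ i₀`. -/
theorem stmt_16 (n i₀ : ℕ) (hn : 4 ≤ n) (v : ℕ → ℤ × ℤ) (a : ℕ → ℤ)
    (hv0 : v 0 = (0, 1)) (hv1 : v 1 = (1, 0)) (hvn : v n = (0, 1))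
    (hi₀ : 2 ≤ i₀ ∧ i₀ ≤ n - 2) (hvi₀ : v i₀ = (0, -1)) (hvi₀' : v (i₀ + 1) = (-1, 0))
    (hinj : ∀ i j, 1 ≤ i → i < j → j ≤ n → v i ≠ v j)
    (hbasis : ∀ i < n, (v i).1 * (v (i + 1)).2 - (v i).2 * (v (i + 1)).1 = -1)
    -- sign-coherence: consecutive rays lie in a common closed quadrant
    (hsc : ∀ i < n,
      ((0 ≤ (v i).1 ∧ 0 ≤ (v (i + 1)).1) ∨ ((v i).1 ≤ 0 ∧ (v (i + 1)).1 ≤ 0)) ∧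
      ((0 ≤ (v i).2 ∧ 0 ≤ (v (i + 1)).2) ∨ ((v i).2 ≤ 0 ∧ (v (i + 1)).2 ≤ 0)))
    (hrec : ∀ i, 1 ≤ i → i ≤ n - 1 → a i • v i = v (i - 1) + v (i + 1))
    (hrecn : a n • v n = v (n - 1) + v 1) :
    (v (n - 1) = (-1, 0) ↔ (i₀ = n - 2 ∧ a (n - 1) = 0 ∧ a n = 0)) ∧
    (v (n - 1) = (-1, 0) → ∀ j, 1 ≤ j → j ≤ i₀ → 0 ≤ a j) := by
  obtain ⟨hi2, hin⟩ := hi₀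
  -- quadrant lemma: v j lies in the fourth quadrant for 1 ≤ j ≤ i₀
  have hq : ∀ j, 1 ≤ j → j ≤ i₀ → 0 ≤ (v j).1 ∧ (v j).2 ≤ 0 := by
    intro j
    induction j with
    | zero => intro h; omega
    | succ k ih =>
      intro h1 h2
      rcases Nat.eq_zero_or_pos k with hk | hk
      · subst hk
        rw [hv1]
        exact ⟨zero_le_one, le_refl 0⟩
      · obtain ⟨hx, hy⟩ := ih hk (by omega)
        have hkn : k < n := by omega
        have hdet := hbasis k hkn
        obtain ⟨hscx, hscy⟩ := hsc k hkn
        rcases lt_or_eq_of_le hy with hylt | hyeq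
        · have hy' : (v (k + 1)).2 ≤ 0 := by
            rcases hscy with ⟨h, _⟩ | ⟨_, h⟩
            · omega
            · exact h
          rcases lt_or_eq_of_le hx with hxlt | hxeq
          · refine ⟨?_, hy'⟩
            rcases hscx with ⟨_, h⟩ | ⟨h, _⟩
            · exact h
            · omega
          · exfalso
            rw [← hxeq, zero_mul, zero_sub] at hdet
            have hmul : (v k).2 * (v (k + 1)).1 = 1 := by linarith
            have hym : (v k).2 = -1 := by
              rcases Int.isUnit_iff.mp (IsUnit.of_mul_eq_one _ hmul) with h | h
              · omega
              · exact h
            have hvk : v k = (0, -1) := Prod.ext_iff.mpr ⟨hxeq.symm, hym⟩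
            exact hinj k i₀ hk (by omega) (by omega) (hvk.trans hvi₀.symm)
        · rw [hyeq, zero_mul, sub_zero] at hdet
          have hx1 : (v k).1 = 1 := by
            have hmul : (v k).1 * (-(v (k + 1)).2) = 1 := by linarith
            rcases Int.isUnit_iff.mp (IsUnit.of_mul_eq_one _ hmul) with h | h
            · exact h
            · omega
          have hy1 : (v (k + 1)).2 = -1 := by
            rw [hx1, one_mul] at hdet; exact hdet
          refine ⟨?_, by omega⟩
          rcases hscx with ⟨_, h⟩ | ⟨h, _⟩
          · exact h
          · omega
  -- positivity of the quiddity entries up to i₀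
  have hpos : ∀ j, 1 ≤ j → j ≤ i₀ → 0 ≤ a j := by
    intro j hj1 hji
    have hrj := hrec j hj1 (by omega)
    have h1 := congrArg Prod.fst hrj
    have h2 := congrArg Prod.snd hrj
    simp only [Prod.smul_fst, Prod.smul_snd, Prod.fst_add, Prod.snd_add,
      smul_eq_mul] at h1 h2
    rcases eq_or_lt_of_le hj1 with hj1' | hj1'
    · -- j = 1
      rw [← hj1'] at h1 ⊢
      simp only [Nat.sub_self, hv0, hv1] at h1
      have := (hq 2 (by omega) (by omega)).1
      norm_num at h1
      omega
    · rcases eq_or_lt_of_le hji with hji' | hji'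
      · -- j = i₀
        rw [hji'] at h2 ⊢
        rw [hvi₀, hvi₀'] at h2
        have := (hq (i₀ - 1) (by omega) (by omega)).2
        norm_num at h2
        nlinarith
      · -- 1 < j < i₀
        have hxj : 0 < (v j).1 := by
          rcases lt_or_eq_of_le (hq j hj1 hji).1 with h | h
          · exact h
          · exfalso
            have hdet := hbasis j (by omega)
            rw [← h, zero_mul, zero_sub] at hdet
            have hmul : (v j).2 * (v (j + 1)).1 = 1 := by linarith
            have hym : (v j).2 = -1 := by
              rcases Int.isUnit_iff.mp (IsUnit.of_mul_eq_one _ hmul) with h' | h'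
              · have := (hq j hj1 hji).2; omega
              · exact h'
            have hvj : v j = (0, -1) := Prod.ext_iff.mpr ⟨h.symm, hym⟩
            exact hinj j i₀ hj1 hji' (by omega) (hvj.trans hvi₀.symm)
        have ha : 0 ≤ (v (j - 1)).1 := (hq (j - 1) (by omega) (by omega)).1
        have hb : 0 ≤ (v (j + 1)).1 := (hq (j + 1) (by omega) (by omega)).1
        nlinarith
  constructor
  · constructor
    · intro h
      have hi : i₀ = n - 2 := by
        by_contra hne
        exact hinj (i₀ + 1) (n - 1) (by omega) (by omega) (by omega)
          (hvi₀'.trans h.symm)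
      refine ⟨hi, ?_, ?_⟩
      · have hrn := hrec (n - 1) (by omega) le_rfl
        rw [show n - 1 - 1 = i₀ by omega, show n - 1 + 1 = n by omega,
          hvi₀, hvn, h] at hrn
        have := congrArg Prod.fst hrn
        simp only [Prod.smul_fst, Prod.fst_add, smul_eq_mul] at this
        norm_num at this
        exact this
      · rw [hvn, h, hv1] at hrecn
        have := congrArg Prod.snd hrecn
        simp only [Prod.smul_snd, Prod.snd_add, smul_eq_mul] at this
        norm_num at this
        exact this
    · rintro ⟨h1, -, -⟩
      rw [show n - 1 = i₀ + 1 by omega]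
      exact hvi₀'
  · intro _ j hj1 hj2
    exact hpos j hj1 hj2
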